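/- Fix k ≥ 1 and s ≥ 1. Then, as n → ∞ (n an integer, n ≥ max(2,s)), n^k · Tr(G_{kn}⁻¹ · G_{ks}) converges to s^k · catalan k. (Equivalently, the variable (n/s)^{1/2}(u₁₁+…+u_ss) in A_o(n) is asymptotically semicircular.) -/

import Mathlib

open scoped BigOperators Classical

/-- Non-crossing pair partitions of {1,…,2k}: fixed-point-free non-crossing
involutions of `Fin (2*k)`. -/
def NCPair (k : ℕ) : Type :=
  {p : Equiv.Perm (Fin (2 * k)) //
    (∀ x, p (p x) = x) ∧ (∀ x, p x ≠ x) ∧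
    ∀ a b c d : Fin (2 * k), a < b → b < c → c < d → p a = c → p b = d → False}

instance (k : ℕ) : Fintype (NCPair k) := by unfold NCPair; infer_instance

instance (k : ℕ) : DecidableEq (NCPair k) := by unfold NCPair; infer_instance

/-- `loops p q`: the number of loops obtained by closing the composed diagram,
i.e. the number of orbits of the subgroup generated by `p` and `q` on `Fin (2*k)`. -/
noncomputable def loops {k : ℕ} (p q : NCPair k) : ℕ :=
  Nat.card (MulAction.orbitRel.Quotient
    (↥(Subgroup.closure ({p.1, q.1} : Set (Equiv.Perm (Fin (2 * k)))))) (Fin (2 * k)))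

/-- The Gram matrix `G_{kn}(p,q) = n^{l(p,q)}`. -/
noncomputable def Gram (k n : ℕ) : Matrix (NCPair k) (NCPair k) ℝ :=
  fun p q => (n : ℝ) ^ loops p q

/-- The loop distance `d(p,q) = k - l(p,q)`. -/
noncomputable def loopDist {k : ℕ} (p q : NCPair k) : ℕ := k - loops p q

section Loops

variable {k : ℕ} (p q : NCPair k)

private abbrev H (p q : NCPair k) : Subgroup (Equiv.Perm (Fin (2 * k))) :=
  Subgroup.closure ({p.1, q.1} : Set (Equiv.Perm (Fin (2 * k))))

noncomputable instance instFintypeQuot (p q : NCPair k) :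
    Fintype (MulAction.orbitRel.Quotient (↥(H p q)) (Fin (2 * k))) :=
  Fintype.ofFinite _

private lemma loops_eq : loops p q =
    Fintype.card (MulAction.orbitRel.Quotient (↥(H p q)) (Fin (2 * k))) :=
  Nat.card_eq_fintype_card

private lemma hp_mem : p.1 ∈ H p q := Subgroup.subset_closure (by simp)
private lemma hq_mem : q.1 ∈ H p q := Subgroup.subset_closure (by simp)

private lemma mk_smul_eq (g : Equiv.Perm (Fin (2 * k))) (hg : g ∈ H p q) (x : Fin (2 * k)) :
    (Quotient.mk'' (g x) : MulAction.orbitRel.Quotient (↥(H p q)) (Fin (2 * k)))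
      = Quotient.mk'' x := by
  apply Quotient.sound'
  exact ⟨⟨g, hg⟩, rfl⟩

private lemma card_sum :
    2 * k = ∑ ω : MulAction.orbitRel.Quotient (↥(H p q)) (Fin (2 * k)),
      (Finset.univ.filter (fun x : Fin (2 * k) => Quotient.mk'' x = ω)).card := by
  classical
  have := Finset.card_eq_sum_card_fiberwise
    (f := fun x : Fin (2 * k) => (Quotient.mk'' x : MulAction.orbitRel.Quotient (↥(H p q)) (Fin (2 * k))))
    (s := Finset.univ) (t := Finset.univ) (fun x _ => Finset.mem_univ _)
  simpa using this

private lemma fiber_two_le (ω : MulAction.orbitRel.Quotient (↥(H p q)) (Fin (2 * k))) :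
    2 ≤ (Finset.univ.filter (fun x : Fin (2 * k) => Quotient.mk'' x = ω)).card := by
  classical
  have ha : (Quotient.mk'' (ω.out) : MulAction.orbitRel.Quotient (↥(H p q)) (Fin (2 * k))) = ω :=
    Quotient.out_eq' ω
  have hpa : (Quotient.mk'' (p.1 ω.out) : MulAction.orbitRel.Quotient (↥(H p q)) (Fin (2 * k))) = ω := by
    rw [mk_smul_eq p q p.1 (hp_mem p q), ha]
  have hne : p.1 ω.out ≠ ω.out := p.2.2.1 _
  rw [Nat.succ_le_iff]
  refine Finset.one_lt_card.mpr ⟨p.1 ω.out, ?_, ω.out, ?_, hne⟩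
  · exact Finset.mem_filter.mpr ⟨Finset.mem_univ _, hpa⟩
  · exact Finset.mem_filter.mpr ⟨Finset.mem_univ _, ha⟩

lemma loops_le : loops p q ≤ k := by
  classical
  have h := card_sum p q
  have h2 : 2 * loops p q ≤ 2 * k := by
    rw [h, loops_eq, ← Finset.card_univ, Finset.card_eq_sum_ones, Finset.mul_sum]
    exact Finset.sum_le_sum fun ω _ => by simpa using fiber_two_le p q ω
  omega

lemma loops_lt (hpq : p ≠ q) : loops p q < k := by
  classical
  obtain ⟨x, hx⟩ : ∃ x, p.1 x ≠ q.1 x := by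
    by_contra h
    push_neg at h
    exact hpq (Subtype.ext (Equiv.ext h))
  set Q := MulAction.orbitRel.Quotient (↥(H p q)) (Fin (2 * k))
  set ω₀ : Q := Quotient.mk'' x with hω₀
  have hfib : 3 ≤ (Finset.univ.filter (fun y : Fin (2 * k) => Quotient.mk'' y = ω₀)).card := by
    have hxm : x ∈ Finset.univ.filter (fun y : Fin (2 * k) => Quotient.mk'' y = ω₀) :=
      Finset.mem_filter.mpr ⟨Finset.mem_univ _, rfl⟩
    have hpm : p.1 x ∈ Finset.univ.filter (fun y : Fin (2 * k) => Quotient.mk'' y = ω₀) :=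
      Finset.mem_filter.mpr ⟨Finset.mem_univ _, mk_smul_eq p q p.1 (hp_mem p q) x⟩
    have hqm : q.1 x ∈ Finset.univ.filter (fun y : Fin (2 * k) => Quotient.mk'' y = ω₀) :=
      Finset.mem_filter.mpr ⟨Finset.mem_univ _, mk_smul_eq p q q.1 (hq_mem p q) x⟩
    have : ({x, p.1 x, q.1 x} : Finset (Fin (2 * k))) ⊆
        Finset.univ.filter (fun y : Fin (2 * k) => Quotient.mk'' y = ω₀) := by
      intro z hz
      simp only [Finset.mem_insert, Finset.mem_singleton] at hz
      rcases hz with rfl | rfl | rfl <;> assumption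
    refine le_trans ?_ (Finset.card_le_card this)
    rw [Finset.card_insert_of_notMem (by simp [(p.2.2.1 x).symm ∘ Eq.symm, (q.2.2.1 x).symm ∘ Eq.symm, Ne.symm (p.2.2.1 x), Ne.symm (q.2.2.1 x)]),
      Finset.card_insert_of_notMem (by simpa using hx)]
    simp
  have h := card_sum p q
  have hsplit : ∑ ω : Q, (Finset.univ.filter (fun y : Fin (2 * k) => Quotient.mk'' y = ω)).card
      ≥ 3 + 2 * (Fintype.card Q - 1) := by
    rw [← Finset.sum_erase_add _ _ (Finset.mem_univ ω₀)]
    have h1 : ∑ ω ∈ Finset.univ.erase ω₀,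
        (Finset.univ.filter (fun y : Fin (2 * k) => Quotient.mk'' y = ω)).card
        ≥ 2 * (Fintype.card Q - 1) := by
      calc ∑ ω ∈ Finset.univ.erase ω₀,
          (Finset.univ.filter (fun y : Fin (2 * k) => Quotient.mk'' y = ω)).card
          ≥ ∑ _ω ∈ Finset.univ.erase ω₀, 2 :=
            Finset.sum_le_sum fun ω _ => fiber_two_le p q ω
        _ = 2 * (Fintype.card Q - 1) := by
            rw [Finset.sum_const, Finset.card_erase_of_mem (Finset.mem_univ _), Finset.card_univ]
            ring
    omega
  have h' : 2 * k = ∑ ω : Q,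
      (Finset.univ.filter (fun y : Fin (2 * k) => Quotient.mk'' y = ω)).card := card_sum p q
  have hQpos : 1 ≤ Fintype.card Q := Fintype.card_pos_iff.mpr ⟨ω₀⟩
  have hL : loops p q = Fintype.card Q := loops_eq p q
  omega

private lemma orbit_pair (a : Fin (2 * k)) (g : Equiv.Perm (Fin (2 * k))) (hg : g ∈ H p p) :
    (g a = a ∨ g a = p.1 a) ∧ (g (p.1 a) = a ∨ g (p.1 a) = p.1 a) := by
  induction hg using Subgroup.closure_induction with
  | mem g hg =>
      have : g = p.1 := by rcases hg with h | h <;> simp_all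
      subst this
      exact ⟨Or.inr rfl, Or.inl (p.2.1 a)⟩
  | one => exact ⟨Or.inl rfl, Or.inr rfl⟩
  | mul g h _ _ ihg ihh =>
      obtain ⟨ihg1, ihg2⟩ := ihg
      obtain ⟨ihh1, ihh2⟩ := ihh
      constructor
      · simp only [Equiv.Perm.mul_apply]
        rcases ihh1 with h1 | h1 <;> rw [h1] <;> tauto
      · simp only [Equiv.Perm.mul_apply]
        rcases ihh2 with h1 | h1 <;> rw [h1] <;> tauto
  | inv g _ ih =>
      obtain ⟨ih1, ih2⟩ := ih
      have hne : a ≠ p.1 a := (Ne.symm (p.2.2.1 a))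
      have hinj := g.injective
      have inv_of : ∀ b c : Fin (2 * k), g b = c → (g⁻¹ : Equiv.Perm _) c = b := by
        intro b c hbc
        rw [← hbc]
        simp
      rcases ih1 with h1 | h1 <;> rcases ih2 with h2 | h2
      · exfalso; exact hne (hinj (h1.trans h2.symm))
      · exact ⟨Or.inl (inv_of _ _ h1), Or.inr (inv_of _ _ h2)⟩
      · exact ⟨Or.inr (inv_of _ _ h2), Or.inl (inv_of _ _ h1)⟩
      · exfalso; exact hne (hinj (h1.trans h2.symm))

lemma loops_self : loops p p = k := by
  classical
  set Q := MulAction.orbitRel.Quotient (↥(H p p)) (Fin (2 * k))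
  have hfib : ∀ ω : Q,
      (Finset.univ.filter (fun x : Fin (2 * k) => Quotient.mk'' x = ω)).card = 2 := by
    intro ω
    refine le_antisymm ?_ (fiber_two_le p p ω)
    have hsub : Finset.univ.filter (fun x : Fin (2 * k) => Quotient.mk'' x = ω)
        ⊆ {ω.out, p.1 ω.out} := by
      intro x hx
      simp only [Finset.mem_filter, Finset.mem_univ, true_and] at hx
      have : (MulAction.orbitRel (↥(H p p)) (Fin (2 * k))) x ω.out := by
        rw [← Quotient.out_eq' ω] at hx
        exact Quotient.exact' hx
      rw [MulAction.orbitRel_apply] at this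
      obtain ⟨⟨g, hg⟩, rfl⟩ := this
      have := (orbit_pair p ω.out g hg).1
      simp only [Finset.mem_insert, Finset.mem_singleton]
      exact this
    calc (Finset.univ.filter (fun x : Fin (2 * k) => Quotient.mk'' x = ω)).card
        ≤ ({ω.out, p.1 ω.out} : Finset (Fin (2 * k))).card := Finset.card_le_card hsub
      _ ≤ 2 := Finset.card_insert_le _ _ |>.trans (by simp)
  have h := card_sum p p
  have h2 : ∑ ω : Q, (Finset.univ.filter (fun x : Fin (2 * k) => Quotient.mk'' x = ω)).card
      = 2 * Fintype.card Q := by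
    rw [Finset.sum_congr rfl (fun ω _ => hfib ω), Finset.sum_const, Finset.card_univ,
      smul_eq_mul, mul_comm]
  rw [h2] at h
  have hL : loops p p = Fintype.card Q := loops_eq p p
  omega

end Loops

section CardNCP

/-- Non-crossing fixed-point-free involution predicate on a linear order. -/
def IsNCP {α : Type*} [LinearOrder α] (p : Equiv.Perm α) : Prop :=
  (∀ x, p (p x) = x) ∧ (∀ x, p x ≠ x) ∧
  ∀ a b c d : α, a < b → b < c → c < d → p a = c → p b = d → False

-- defeq check
example (k : ℕ) (q : Equiv.Perm (Fin (2 * k))) (hq : IsNCP q) : NCPair k := ⟨q, hq⟩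
example (k : ℕ) (p : NCPair k) : IsNCP p.1 := p.2

private instance (k : ℕ) : NeZero (2 * (k + 1)) := ⟨by omega⟩

/-- Transfer of `IsNCP` along an order isomorphism. -/
lemma isNCP_congr {α β : Type*} [LinearOrder α] [LinearOrder β] (e : α ≃o β)
    {p : Equiv.Perm α} (hp : IsNCP p) : IsNCP (e.toEquiv.permCongr p) := by
  obtain ⟨h1, h2, h3⟩ := hp
  refine ⟨?_, ?_, ?_⟩
  · intro x
    simp [Equiv.permCongr_apply, h1]
  · intro x hx
    simp only [Equiv.permCongr_apply] at hx
    have : p (e.symm x) = e.symm x := by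
      have := congrArg e.symm hx
      simpa using this
    exact h2 _ this
  · intro a b c d hab hbc hcd hac hbd
    simp only [Equiv.permCongr_apply] at hac hbd
    have hac' : p (e.symm a) = e.symm c := by
      have := congrArg e.symm hac; simpa using this
    have hbd' : p (e.symm b) = e.symm d := by
      have := congrArg e.symm hbd; simpa using this
    exact h3 _ _ _ _ (e.symm.strictMono hab) (e.symm.strictMono hbc) (e.symm.strictMono hcd)
      hac' hbd'

/-- Transfer of `IsNCP` to an invariant subtype. -/
lemma isNCP_subtypePerm {n : ℕ} {p : Equiv.Perm (Fin n)} (hp : IsNCP p)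
    {S : Fin n → Prop} (hS : ∀ x, S x ↔ S (p x)) :
    IsNCP (p.subtypePerm (fun x => (hS x).symm)) := by
  obtain ⟨h1, h2, h3⟩ := hp
  refine ⟨?_, ?_, ?_⟩
  · intro x
    ext
    simp [Equiv.Perm.subtypePerm_apply, h1]
  · intro x hx
    apply h2 x.1
    simpa [Subtype.ext_iff] using hx
  · intro a b c d hab hbc hcd hac hbd
    simp only [Subtype.ext_iff, Equiv.Perm.subtypePerm_apply] at hac hbd
    exact h3 a.1 b.1 c.1 d.1 (by exact_mod_cast hab) (by exact_mod_cast hbc)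
      (by exact_mod_cast hcd) hac hbd

/-- A fixed-point-free involution on a finite linear order acts on an even-sized set. -/
lemma even_card_of_fpf {α : Type*} [Fintype α] [LinearOrder α] (f : Equiv.Perm α)
    (h1 : ∀ x, f (f x) = x) (h2 : ∀ x, f x ≠ x) : Even (Fintype.card α) := by
  classical
  set s := Finset.univ.filter (fun x => x < f x) with hs
  set t := Finset.univ.filter (fun x => f x < x) with ht
  have hcard : s.card = t.card := by
    apply Finset.card_bij' (fun x _ => f x) (fun y _ => f y)
    · intro x hx
      simp only [hs, ht, Finset.mem_filter, Finset.mem_univ, true_and] at *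
      rw [h1]; exact hx
    · intro y hy
      simp only [hs, ht, Finset.mem_filter, Finset.mem_univ, true_and] at *
      rw [h1]; exact hy
    · intro x _; exact h1 x
    · intro y _; exact h1 y
  have hunion : s ∪ t = Finset.univ := by
    ext x
    simp only [hs, ht, Finset.mem_union, Finset.mem_filter, Finset.mem_univ, true_and, iff_true]
    rcases lt_trichotomy x (f x) with h | h | h
    · exact Or.inl h
    · exact absurd h.symm (h2 x)
    · exact Or.inr h
  have hdisj : Disjoint s t := by
    rw [Finset.disjoint_left]
    intro x hxs hxt
    simp only [hs, ht, Finset.mem_filter, Finset.mem_univ, true_and] at hxs hxt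
    exact absurd (hxs.trans hxt) (lt_irrefl x)
  have : Fintype.card α = s.card + t.card := by
    rw [← Finset.card_union_of_disjoint hdisj, hunion, Finset.card_univ]
  rw [this, hcard]
  exact ⟨t.card, rfl⟩


variable {k : ℕ}

/-- order iso from `Fin (2*j)` onto the open interval `(0, m)` when `m = 2j+1`. -/
def innerIso (m : Fin (2 * (k + 1))) (j : ℕ) (hm : (m : ℕ) = 2 * j + 1) (hj : j ≤ k) :
    Fin (2 * j) ≃o {x : Fin (2 * (k + 1)) // 0 < x ∧ x < m} where
  toFun y := ⟨⟨y.1 + 1, by have := y.isLt; omega⟩, by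
    constructor
    · rw [Fin.lt_def]; simp
    · rw [Fin.lt_def]; have := y.isLt; simp only [hm]; omega⟩
  invFun x := ⟨x.1.1 - 1, by
    have h1 : 0 < x.1.1 := by have := x.2.1; rwa [Fin.lt_def, Fin.val_zero] at this
    have h2 : x.1.1 < (m : ℕ) := by have := x.2.2; rwa [Fin.lt_def] at this
    omega⟩
  left_inv y := by ext; simp
  right_inv x := by
    have h1 : 0 < x.1.1 := by have := x.2.1; rwa [Fin.lt_def, Fin.val_zero] at this
    ext; simp; omega
  map_rel_iff' {a b} := by
    simp only [Equiv.coe_fn_mk, Subtype.mk_le_mk, Fin.mk_le_mk, Fin.le_def]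
    omega

/-- order iso from `Fin (2*(k-j))` onto the interval `(m, 2k+1]` when `m = 2j+1`. -/
def outerIso (m : Fin (2 * (k + 1))) (j : ℕ) (hm : (m : ℕ) = 2 * j + 1) (hj : j ≤ k) :
    Fin (2 * (k - j)) ≃o {x : Fin (2 * (k + 1)) // m < x} where
  toFun y := ⟨⟨y.1 + 2 * j + 2, by have := y.isLt; omega⟩, by
    rw [Fin.lt_def]; simp only [hm]; omega⟩
  invFun x := ⟨x.1.1 - (2 * j + 2), by
    have h2 : (m : ℕ) < x.1.1 := by have := x.2; rwa [Fin.lt_def] at this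
    have := x.1.isLt; omega⟩
  left_inv y := by ext; simp
  right_inv x := by
    have h2 : (m : ℕ) < x.1.1 := by have := x.2; rwa [Fin.lt_def] at this
    ext; simp; omega
  map_rel_iff' {a b} := by
    simp only [Equiv.coe_fn_mk, Subtype.mk_le_mk, Fin.mk_le_mk, Fin.le_def]
    omega

/-- interval `(0,m)` has `m - 1` elements. -/
def innerCardEquiv (m : Fin (2 * (k + 1))) :
    {x : Fin (2 * (k + 1)) // 0 < x ∧ x < m} ≃ Fin ((m : ℕ) - 1) where
  toFun x := ⟨x.1.1 - 1, by
    have h1 : 0 < x.1.1 := by have := x.2.1; rwa [Fin.lt_def, Fin.val_zero] at this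
    have h2 : x.1.1 < (m : ℕ) := by have := x.2.2; rwa [Fin.lt_def] at this
    omega⟩
  invFun y := ⟨⟨y.1 + 1, by have := y.isLt; have := m.isLt; omega⟩, by
    constructor
    · rw [Fin.lt_def]; simp
    · rw [Fin.lt_def]; have := y.isLt; simp only []; omega⟩
  left_inv x := by
    have h1 : 0 < x.1.1 := by have := x.2.1; rwa [Fin.lt_def, Fin.val_zero] at this
    ext; simp; omega
  right_inv y := by ext; simp

section Invariance

variable {p : Equiv.Perm (Fin (2 * (k + 1)))} {m : Fin (2 * (k + 1))}
  (hp : IsNCP p) (h0 : p 0 = m)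

include hp h0

lemma p_m_eq : p m = 0 := by rw [← h0, hp.1]

lemma m_ne_zero : m ≠ 0 := by rw [← h0]; exact hp.2.1 0

lemma forward_inner : ∀ x, 0 < x → x < m → 0 < p x ∧ p x < m := by
  intro x hx1 hx2
  have hne0 : p x ≠ 0 := by
    intro h
    have : p (p x) = p 0 := congrArg p h
    rw [hp.1, h0] at this
    exact absurd this (ne_of_lt hx2)
  have hnem : p x ≠ m := by
    intro h
    have := congrArg p h
    rw [hp.1, p_m_eq hp h0] at this
    exact absurd this (ne_of_gt hx1)
  have hlt : p x < m := by
    by_contra hge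
    have hmx : m < p x := lt_of_le_of_ne (not_lt.mp hge) (Ne.symm hnem)
    exact hp.2.2 0 x m (p x) hx1 hx2 hmx h0 rfl
  exact ⟨Fin.pos_of_ne_zero hne0, hlt⟩

lemma inner_invariant : ∀ x, (0 < x ∧ x < m) ↔ (0 < p x ∧ p x < m) := by
  intro x
  constructor
  · exact fun h => forward_inner hp h0 x h.1 h.2
  · intro h
    have := forward_inner hp h0 (p x) h.1 h.2
    rwa [hp.1] at this

lemma forward_outer : ∀ x, m < x → m < p x := by
  intro x hx
  have hne0 : p x ≠ 0 := by
    intro h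
    have : p (p x) = p 0 := congrArg p h
    rw [hp.1, h0] at this
    exact absurd this (ne_of_gt hx)
  have hnem : p x ≠ m := by
    intro h
    have hx0 := congrArg p h
    rw [hp.1, p_m_eq hp h0] at hx0
    rw [hx0, Fin.lt_def, Fin.val_zero] at hx
    omega
  by_contra hge
  have hlt : p x < m := lt_of_le_of_ne (not_lt.mp hge) hnem
  have hpos : 0 < p x := Fin.pos_of_ne_zero hne0
  exact hp.2.2 0 (p x) m x hpos hlt hx h0 (hp.1 x)

lemma outer_invariant : ∀ x, (m < x) ↔ (m < p x) := by
  intro x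
  constructor
  · exact forward_outer hp h0 x
  · intro h
    have := forward_outer hp h0 (p x) h
    rwa [hp.1] at this

end Invariance


section Glue

variable {k : ℕ} (m : Fin (2 * (k + 1))) (j : ℕ) (hm : (m : ℕ) = 2 * j + 1) (hj : j ≤ k)
  (q₁ : Equiv.Perm (Fin (2 * j))) (q₂ : Equiv.Perm (Fin (2 * (k - j))))

def glueFun (x : Fin (2 * (k + 1))) : Fin (2 * (k + 1)) :=
  if hx0 : x = 0 then m
  else if hxm : x = m then 0
  else if hlt : x < m then
    (innerIso m j hm hj (q₁ ((innerIso m j hm hj).symm ⟨x, ⟨Fin.pos_of_ne_zero hx0, hlt⟩⟩))).1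
  else
    (outerIso m j hm hj (q₂ ((outerIso m j hm hj).symm
      ⟨x, lt_of_le_of_ne (not_lt.mp hlt) (Ne.symm hxm)⟩))).1

include hm in
lemma m_ne_zero' : m ≠ 0 := by
  intro h
  rw [h, Fin.val_zero] at hm
  omega

lemma glueFun_zero : glueFun m j hm hj q₁ q₂ 0 = m := by
  rw [glueFun, dif_pos rfl]

lemma glueFun_m : glueFun m j hm hj q₁ q₂ m = 0 := by
  rw [glueFun, dif_neg (m_ne_zero' m j hm), dif_pos rfl]

lemma glueFun_inner (x : Fin (2 * (k + 1))) (hx : 0 < x ∧ x < m) :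
    glueFun m j hm hj q₁ q₂ x
      = (innerIso m j hm hj (q₁ ((innerIso m j hm hj).symm ⟨x, hx⟩))).1 := by
  have hx0 : x ≠ 0 := Fin.pos_iff_ne_zero.mp hx.1
  rw [glueFun, dif_neg hx0, dif_neg hx.2.ne, dif_pos hx.2]

lemma glueFun_outer (x : Fin (2 * (k + 1))) (hx : m < x) :
    glueFun m j hm hj q₁ q₂ x
      = (outerIso m j hm hj (q₂ ((outerIso m j hm hj).symm ⟨x, hx⟩))).1 := by
  have hx0 : x ≠ 0 := by
    intro h
    rw [h, Fin.lt_def, Fin.val_zero] at hx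
    omega
  rw [glueFun, dif_neg hx0, dif_neg hx.ne', dif_neg (not_lt.mpr hx.le)]

lemma glueFun_invol (hq₁ : ∀ y, q₁ (q₁ y) = y) (hq₂ : ∀ y, q₂ (q₂ y) = y) :
    Function.Involutive (glueFun m j hm hj q₁ q₂) := by
  intro x
  by_cases hx0 : x = 0
  · rw [hx0, glueFun_zero, glueFun_m]
  by_cases hxm : x = m
  · rw [hxm, glueFun_m, glueFun_zero]
  by_cases hlt : x < m
  · have hx : 0 < x ∧ x < m := ⟨Fin.pos_of_ne_zero hx0, hlt⟩
    rw [glueFun_inner m j hm hj q₁ q₂ x hx]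
    set Y := innerIso m j hm hj (q₁ ((innerIso m j hm hj).symm ⟨x, hx⟩)) with hY
    rw [glueFun_inner m j hm hj q₁ q₂ Y.1 Y.2]
    simp [hY, hq₁]
  · have hx : m < x := lt_of_le_of_ne (not_lt.mp hlt) (Ne.symm hxm)
    rw [glueFun_outer m j hm hj q₁ q₂ x hx]
    set Y := outerIso m j hm hj (q₂ ((outerIso m j hm hj).symm ⟨x, hx⟩)) with hY
    rw [glueFun_outer m j hm hj q₁ q₂ Y.1 Y.2]
    simp [hY, hq₂]

variable (hq₁ : IsNCP q₁) (hq₂ : IsNCP q₂)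

def gluePerm : Equiv.Perm (Fin (2 * (k + 1))) :=
  Function.Involutive.toPerm _ (glueFun_invol m j hm hj q₁ q₂ hq₁.1 hq₂.1)

lemma gluePerm_apply (x : Fin (2 * (k + 1))) :
    gluePerm m j hm hj q₁ q₂ hq₁ hq₂ x = glueFun m j hm hj q₁ q₂ x := rfl

lemma isNCP_gluePerm : IsNCP (gluePerm m j hm hj q₁ q₂ hq₁ hq₂) := by
  refine ⟨glueFun_invol m j hm hj q₁ q₂ hq₁.1 hq₂.1, ?_, ?_⟩
  · -- fixed point free
    intro x
    rw [gluePerm_apply]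
    by_cases hx0 : x = 0
    · rw [hx0, glueFun_zero]
      exact m_ne_zero' m j hm
    by_cases hxm : x = m
    · rw [hxm, glueFun_m]
      exact Ne.symm (m_ne_zero' m j hm)
    by_cases hlt : x < m
    · have hx : 0 < x ∧ x < m := ⟨Fin.pos_of_ne_zero hx0, hlt⟩
      rw [glueFun_inner m j hm hj q₁ q₂ x hx]
      intro h
      have h2 : innerIso m j hm hj (q₁ ((innerIso m j hm hj).symm ⟨x, hx⟩)) = ⟨x, hx⟩ :=
        Subtype.ext h
      have h3 := congrArg (innerIso m j hm hj).symm h2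
      rw [OrderIso.symm_apply_apply] at h3
      exact hq₁.2.1 _ h3
    · have hx : m < x := lt_of_le_of_ne (not_lt.mp hlt) (Ne.symm hxm)
      rw [glueFun_outer m j hm hj q₁ q₂ x hx]
      intro h
      have h2 : outerIso m j hm hj (q₂ ((outerIso m j hm hj).symm ⟨x, hx⟩)) = ⟨x, hx⟩ :=
        Subtype.ext h
      have h3 := congrArg (outerIso m j hm hj).symm h2
      rw [OrderIso.symm_apply_apply] at h3
      exact hq₂.2.1 _ h3
  · -- non-crossing
    intro a b c d hab hbc hcd hac hbd
    rw [gluePerm_apply] at hac hbd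
    by_cases ha0 : a = 0
    · -- a = 0, c = m, then b and d are inner, but c < d
      subst ha0
      rw [glueFun_zero] at hac
      subst hac
      have hb : 0 < b ∧ b < m := ⟨hab, hbc⟩
      rw [glueFun_inner m j hm hj q₁ q₂ b hb] at hbd
      have : d < m := hbd ▸ (innerIso m j hm hj (q₁ ((innerIso m j hm hj).symm ⟨b, hb⟩))).2.2
      exact absurd (hcd.trans this) (lt_irrefl _)
    by_cases ham : a = m
    · -- a = m, c = 0, impossible since b < c
      subst ham
      rw [glueFun_m] at hac
      rw [← hac, Fin.lt_def, Fin.val_zero] at hbc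
      omega
    by_cases halt : a < m
    · -- all four inner
      have ha : 0 < a ∧ a < m := ⟨Fin.pos_of_ne_zero ha0, halt⟩
      rw [glueFun_inner m j hm hj q₁ q₂ a ha] at hac
      have hc : 0 < c ∧ c < m :=
        hac ▸ (innerIso m j hm hj (q₁ ((innerIso m j hm hj).symm ⟨a, ha⟩))).2
      have hb : 0 < b ∧ b < m := ⟨ha.1.trans hab, hbc.trans hc.2⟩
      rw [glueFun_inner m j hm hj q₁ q₂ b hb] at hbd
      have hd : 0 < d ∧ d < m :=
        hbd ▸ (innerIso m j hm hj (q₁ ((innerIso m j hm hj).symm ⟨b, hb⟩))).2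
      set e := innerIso m j hm hj
      have hAC : q₁ (e.symm ⟨a, ha⟩) = e.symm ⟨c, hc⟩ := by
        have h2 : e (q₁ (e.symm ⟨a, ha⟩)) = ⟨c, hc⟩ := Subtype.ext hac
        have h3 := congrArg e.symm h2
        rwa [OrderIso.symm_apply_apply] at h3
      have hBD : q₁ (e.symm ⟨b, hb⟩) = e.symm ⟨d, hd⟩ := by
        have h2 : e (q₁ (e.symm ⟨b, hb⟩)) = ⟨d, hd⟩ := Subtype.ext hbd
        have h3 := congrArg e.symm h2
        rwa [OrderIso.symm_apply_apply] at h3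
      exact hq₁.2.2 _ _ _ _
        (e.symm.strictMono (Subtype.mk_lt_mk.mpr hab))
        (e.symm.strictMono (Subtype.mk_lt_mk.mpr hbc))
        (e.symm.strictMono (Subtype.mk_lt_mk.mpr hcd)) hAC hBD
    · -- all four outer
      have ha : m < a := lt_of_le_of_ne (not_lt.mp halt) (Ne.symm ham)
      rw [glueFun_outer m j hm hj q₁ q₂ a ha] at hac
      have hb : m < b := ha.trans hab
      rw [glueFun_outer m j hm hj q₁ q₂ b hb] at hbd
      have hc : m < c :=
        hac ▸ (outerIso m j hm hj (q₂ ((outerIso m j hm hj).symm ⟨a, ha⟩))).2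
      have hd : m < d :=
        hbd ▸ (outerIso m j hm hj (q₂ ((outerIso m j hm hj).symm ⟨b, hb⟩))).2
      set e := outerIso m j hm hj
      have hAC : q₂ (e.symm ⟨a, ha⟩) = e.symm ⟨c, hc⟩ := by
        have h2 : e (q₂ (e.symm ⟨a, ha⟩)) = ⟨c, hc⟩ := Subtype.ext hac
        have h3 := congrArg e.symm h2
        rwa [OrderIso.symm_apply_apply] at h3
      have hBD : q₂ (e.symm ⟨b, hb⟩) = e.symm ⟨d, hd⟩ := by
        have h2 : e (q₂ (e.symm ⟨b, hb⟩)) = ⟨d, hd⟩ := Subtype.ext hbd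
        have h3 := congrArg e.symm h2
        rwa [OrderIso.symm_apply_apply] at h3
      exact hq₂.2.2 _ _ _ _
        (e.symm.strictMono (Subtype.mk_lt_mk.mpr hab))
        (e.symm.strictMono (Subtype.mk_lt_mk.mpr hbc))
        (e.symm.strictMono (Subtype.mk_lt_mk.mpr hcd)) hAC hBD

end Glue

section Fiber

variable {k : ℕ} (m : Fin (2 * (k + 1))) (j : ℕ) (hm : (m : ℕ) = 2 * j + 1) (hj : j ≤ k)

def toInner (p : Equiv.Perm (Fin (2 * (k + 1)))) (hp : IsNCP p) (h0 : p 0 = m) :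
    Equiv.Perm (Fin (2 * j)) :=
  ((innerIso m j hm hj).symm.toEquiv).permCongr (p.subtypePerm (fun x => (inner_invariant hp h0 x).symm))

def toOuter (p : Equiv.Perm (Fin (2 * (k + 1)))) (hp : IsNCP p) (h0 : p 0 = m) :
    Equiv.Perm (Fin (2 * (k - j))) :=
  ((outerIso m j hm hj).symm.toEquiv).permCongr (p.subtypePerm (fun x => (outer_invariant hp h0 x).symm))

lemma isNCP_toInner (p : Equiv.Perm (Fin (2 * (k + 1)))) (hp : IsNCP p) (h0 : p 0 = m) :
    IsNCP (toInner m j hm hj p hp h0) :=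
  isNCP_congr (innerIso m j hm hj).symm (isNCP_subtypePerm hp (inner_invariant hp h0))

lemma isNCP_toOuter (p : Equiv.Perm (Fin (2 * (k + 1)))) (hp : IsNCP p) (h0 : p 0 = m) :
    IsNCP (toOuter m j hm hj p hp h0) :=
  isNCP_congr (outerIso m j hm hj).symm (isNCP_subtypePerm hp (outer_invariant hp h0))

def fiberEquiv : {p : NCPair (k + 1) // p.1 0 = m} ≃ NCPair j × NCPair (k - j) where
  toFun P := (⟨toInner m j hm hj P.1.1 P.1.2 P.2, isNCP_toInner m j hm hj P.1.1 P.1.2 P.2⟩,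
              ⟨toOuter m j hm hj P.1.1 P.1.2 P.2, isNCP_toOuter m j hm hj P.1.1 P.1.2 P.2⟩)
  invFun Q := ⟨⟨gluePerm m j hm hj Q.1.1 Q.2.1 Q.1.2 Q.2.2,
      isNCP_gluePerm m j hm hj Q.1.1 Q.2.1 Q.1.2 Q.2.2⟩,
      glueFun_zero m j hm hj Q.1.1 Q.2.1⟩
  left_inv P := by
    obtain ⟨⟨p, hp⟩, h0⟩ := P
    apply Subtype.ext
    apply Subtype.ext
    apply Equiv.ext
    intro x
    show glueFun m j hm hj _ _ x = p x
    by_cases hx0 : x = 0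
    · rw [hx0, glueFun_zero]
      exact h0.symm
    by_cases hxm : x = m
    · rw [hxm, glueFun_m]
      exact (p_m_eq hp h0).symm
    by_cases hlt : x < m
    · have hx : 0 < x ∧ x < m := ⟨Fin.pos_of_ne_zero hx0, hlt⟩
      rw [glueFun_inner m j hm hj _ _ x hx]
      simp [toInner, Equiv.permCongr_apply, Equiv.Perm.subtypePerm_apply]
    · have hx : m < x := lt_of_le_of_ne (not_lt.mp hlt) (Ne.symm hxm)
      rw [glueFun_outer m j hm hj _ _ x hx]
      simp [toOuter, Equiv.permCongr_apply, Equiv.Perm.subtypePerm_apply]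
  right_inv Q := by
    obtain ⟨⟨q₁, hq₁⟩, ⟨q₂, hq₂⟩⟩ := Q
    refine Prod.ext ?_ ?_
    · apply Subtype.ext
      apply Equiv.ext
      intro y
      show ((innerIso m j hm hj).symm.toEquiv).permCongr _ y = q₁ y
      rw [Equiv.permCongr_apply]
      simp only [Equiv.symm_symm]
      have key : ((gluePerm m j hm hj q₁ q₂ hq₁ hq₂).subtypePerm
          (fun x => (inner_invariant (isNCP_gluePerm m j hm hj q₁ q₂ hq₁ hq₂)
            (glueFun_zero m j hm hj q₁ q₂) x).symm))
          ((innerIso m j hm hj) y) = (innerIso m j hm hj) (q₁ y) := by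
        apply Subtype.ext
        show glueFun m j hm hj q₁ q₂ ((innerIso m j hm hj) y).1 = _
        rw [glueFun_inner m j hm hj q₁ q₂ _ ((innerIso m j hm hj) y).2]
        simp
      rw [show ((innerIso m j hm hj).symm.toEquiv).symm = (innerIso m j hm hj).toEquiv from rfl]
      show (innerIso m j hm hj).symm _ = q₁ y
      rw [show ((innerIso m j hm hj).toEquiv y : { x // 0 < x ∧ x < m })
        = (innerIso m j hm hj) y from rfl, key]
      simp
    · apply Subtype.ext
      apply Equiv.ext
      intro y
      show ((outerIso m j hm hj).symm.toEquiv).permCongr _ y = q₂ y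
      rw [Equiv.permCongr_apply]
      simp only [Equiv.symm_symm]
      have key : ((gluePerm m j hm hj q₁ q₂ hq₁ hq₂).subtypePerm
          (fun x => (outer_invariant (isNCP_gluePerm m j hm hj q₁ q₂ hq₁ hq₂)
            (glueFun_zero m j hm hj q₁ q₂) x).symm))
          ((outerIso m j hm hj) y) = (outerIso m j hm hj) (q₂ y) := by
        apply Subtype.ext
        show glueFun m j hm hj q₁ q₂ ((outerIso m j hm hj) y).1 = _
        rw [glueFun_outer m j hm hj q₁ q₂ _ ((outerIso m j hm hj) y).2]
        simp
      rw [show ((outerIso m j hm hj).symm.toEquiv).symm = (outerIso m j hm hj).toEquiv from rfl]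
      show (outerIso m j hm hj).symm _ = q₂ y
      rw [show ((outerIso m j hm hj).toEquiv y : { x // m < x })
        = (outerIso m j hm hj) y from rfl, key]
      simp
end Fiber

end CardNCP

section Count

variable {k : ℕ}

lemma card_fiber_odd (m : Fin (2 * (k + 1))) (j : ℕ) (hm : (m : ℕ) = 2 * j + 1) (hj : j ≤ k) :
    Fintype.card {p : NCPair (k + 1) // p.1 0 = m}
      = Fintype.card (NCPair j) * Fintype.card (NCPair (k - j)) := by
  rw [Fintype.card_congr (fiberEquiv m j hm hj), Fintype.card_prod]

lemma card_fiber_even (m : Fin (2 * (k + 1))) (hme : (m : ℕ) % 2 = 0) :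
    Fintype.card {p : NCPair (k + 1) // p.1 0 = m} = 0 := by
  rw [Fintype.card_eq_zero_iff]
  constructor
  rintro ⟨⟨p, hp⟩, h0⟩
  have hp' : IsNCP p := hp
  by_cases hm0 : m = 0
  · exact hp'.2.1 0 (by rw [h0, hm0])
  · have hinv := inner_invariant hp' h0
    have hsub := isNCP_subtypePerm hp' hinv
    have heven := even_card_of_fpf _ hsub.1 hsub.2.1
    have hcard : Fintype.card {x : Fin (2 * (k + 1)) // 0 < x ∧ x < m} = (m : ℕ) - 1 := by
      rw [Fintype.card_congr (innerCardEquiv m), Fintype.card_fin]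
    rw [hcard, Nat.even_iff] at heven
    have hmv : (m : ℕ) ≠ 0 := by
      intro h
      exact hm0 (Fin.ext (by simp [h]))
    omega

lemma card_NCPair_zero : Fintype.card (NCPair 0) = 1 := by
  rw [Fintype.card_eq_one_iff]
  refine ⟨⟨1, fun x => x.elim0, fun x => x.elim0, fun a => a.elim0⟩, ?_⟩
  intro y
  apply Subtype.ext
  apply Equiv.ext
  intro x
  exact x.elim0

lemma sum_every_other (g : ℕ → ℕ) :
    ∀ t : ℕ, ∑ v ∈ Finset.range (2 * t), (if v % 2 = 1 then g (v / 2) else 0)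
      = ∑ i ∈ Finset.range t, g i := by
  intro t
  induction t with
  | zero => simp
  | succ t ih =>
      rw [show 2 * (t + 1) = (2 * t + 1) + 1 by ring, Finset.sum_range_succ,
        Finset.sum_range_succ, ih, Finset.sum_range_succ]
      have h1 : (2 * t) % 2 = 0 := by omega
      have h2 : (2 * t + 1) % 2 = 1 := by omega
      have h3 : (2 * t + 1) / 2 = t := by omega
      rw [if_neg (by omega), if_pos h2, h3, add_zero]

lemma card_NCPair (k : ℕ) : Fintype.card (NCPair k) = catalan k := by
  induction k using Nat.strong_induction_on with
  | _ k IH =>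
    match k with
    | 0 => rw [card_NCPair_zero, catalan_zero]
    | Nat.succ k =>
      classical
      have hdecomp : Fintype.card (NCPair (k + 1))
          = ∑ m : Fin (2 * (k + 1)), Fintype.card {p : NCPair (k + 1) // p.1 0 = m} := by
        rw [← Fintype.card_sigma]
        exact Fintype.card_congr (Equiv.sigmaFiberEquiv (fun p : NCPair (k + 1) => p.1 0)).symm
      have hterm : ∀ m : Fin (2 * (k + 1)),
          Fintype.card {p : NCPair (k + 1) // p.1 0 = m}
            = (if (m : ℕ) % 2 = 1 then catalan ((m : ℕ) / 2) * catalan (k - (m : ℕ) / 2) else 0) := by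
        intro m
        by_cases hodd : (m : ℕ) % 2 = 1
        · rw [if_pos hodd]
          have hmlt := m.isLt
          have hm : (m : ℕ) = 2 * ((m : ℕ) / 2) + 1 := by omega
          have hj : (m : ℕ) / 2 ≤ k := by omega
          rw [card_fiber_odd m ((m : ℕ) / 2) hm hj,
            IH _ (by omega), IH _ (by omega)]
        · rw [if_neg hodd, card_fiber_even m (by omega)]
      rw [hdecomp, Finset.sum_congr rfl (fun m _ => hterm m)]
      rw [Fin.sum_univ_eq_sum_range
        (fun v => if v % 2 = 1 then catalan (v / 2) * catalan (k - v / 2) else 0) (2 * (k + 1))]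
      rw [sum_every_other (fun i => catalan i * catalan (k - i)) (k + 1)]
      rw [catalan_succ k, Fin.sum_univ_eq_sum_range (fun i => catalan i * catalan (k - i)) (k + 1)]

end Count


section Analysis

open Filter Matrix

variable (k : ℕ)

/-- Normalized matrix `A x p q = x ^ (k - loops p q)`, so `Gram k n = n^k • A (1/n)`. -/
noncomputable def Amat (k : ℕ) (x : ℝ) : Matrix (NCPair k) (NCPair k) ℝ :=
  fun p q => x ^ loopDist p q

lemma Amat_zero : Amat k 0 = 1 := by
  classical
  funext p q
  by_cases h : p = q
  · subst h
    simp [Amat, loopDist, loops_self, Matrix.one_apply]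
  · have : 0 < loopDist p q := by
      have := loops_lt p q h
      unfold loopDist; omega
    simp [Amat, Matrix.one_apply, h, zero_pow this.ne']

lemma Amat_cont : Continuous (Amat k) :=
  continuous_pi fun _ => continuous_pi fun _ => continuous_pow _

lemma Gram_eq_smul {n : ℕ} (hn : 1 ≤ n) :
    Gram k n = ((n : ℝ) ^ k) • Amat k ((n : ℝ)⁻¹) := by
  funext p q
  have hn0 : (n : ℝ) ≠ 0 := Nat.cast_ne_zero.mpr (by omega)
  have hle : loopDist p q ≤ k := Nat.sub_le _ _
  have : (n : ℝ) ^ loops p q = (n : ℝ) ^ (k - loopDist p q) := by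
    congr 1
    have := loops_le p q
    unfold loopDist
    omega
  simp only [Gram, Matrix.smul_apply, Amat, smul_eq_mul]
  rw [this, pow_sub₀ _ hn0 hle, inv_pow]

end Analysis

/-- As n → ∞, n^k · Tr(G_{kn}⁻¹ G_{ks}) → s^k · catalan k :
the variable (n/s)^{1/2}(u₁₁+…+u_ss) is asymptotically semicircular. -/
theorem trace_weingarten_gram_tendsto (k s : ℕ) (hk : 1 ≤ k) (hs : 1 ≤ s) :
    Filter.Tendsto (fun n : ℕ => (n : ℝ) ^ k * ((Gram k n)⁻¹ * Gram k s).trace)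
      Filter.atTop (nhds ((s : ℝ) ^ k * catalan k)) := by
  classical
  open Filter Matrix in
  -- the limit function
  have hAcont := Amat_cont k
  have hA0 : Amat k 0 = 1 := Amat_zero k
  have hdet_cont : Continuous fun x : ℝ => (Amat k x).det := hAcont.matrix_det
  have hdet0 : (Amat k 0).det = 1 := by rw [hA0, Matrix.det_one]
  -- continuity of x ↦ trace ((A x)⁻¹ * Gram k s) at 0
  have hinvAt : ContinuousAt Inv.inv (Amat k 0) := by
    apply continuousAt_matrix_inv
    rw [hdet0]
    rw [Ring.inverse_eq_inv']
    exact continuousAt_inv₀ one_ne_zero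
  have htr_cont : Continuous fun B : Matrix (NCPair k) (NCPair k) ℝ => (B * Gram k s).trace :=
    (continuous_id.matrix_mul continuous_const).matrix_trace
  have hF : ContinuousAt (fun x : ℝ => (((Amat k x)⁻¹) * Gram k s).trace) 0 :=
    (htr_cont.continuousAt).comp (hinvAt.comp (hAcont.continuousAt))
  have hlim0 : ((Amat k 0)⁻¹ * Gram k s).trace = (s : ℝ) ^ k * catalan k := by
    rw [hA0, inv_one, one_mul, Matrix.trace]
    have : ∀ p : NCPair k, (Gram k s).diag p = (s : ℝ) ^ k := by
      intro p; simp [Gram, Matrix.diag, loops_self]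
    rw [Finset.sum_congr rfl (fun p _ => this p), Finset.sum_const, Finset.card_univ,
      card_NCPair, nsmul_eq_mul, mul_comm]
  -- n ↦ 1/n tends to 0
  have hn_inv : Tendsto (fun n : ℕ => ((n : ℝ))⁻¹) atTop (nhds 0) :=
    tendsto_inv_atTop_zero.comp tendsto_natCast_atTop_atTop
  have hmain : Tendsto (fun n : ℕ => (((Amat k ((n : ℝ)⁻¹))⁻¹) * Gram k s).trace)
      atTop (nhds ((s : ℝ) ^ k * catalan k)) := by
    rw [← hlim0]
    exact (hF.tendsto.comp hn_inv)
  -- eventually the original function agrees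
  have hdet_ev : ∀ᶠ n : ℕ in atTop, (Amat k ((n : ℝ)⁻¹)).det ≠ 0 := by
    have : Tendsto (fun n : ℕ => (Amat k ((n : ℝ)⁻¹)).det) atTop (nhds 1) := by
      have := (hdet_cont.continuousAt (x := 0)).tendsto.comp hn_inv
      rwa [hdet0] at this
    exact this.eventually_ne one_ne_zero
  have hev : (fun n : ℕ => (n : ℝ) ^ k * ((Gram k n)⁻¹ * Gram k s).trace)
      =ᶠ[atTop] (fun n : ℕ => (((Amat k ((n : ℝ)⁻¹))⁻¹) * Gram k s).trace) := by
    filter_upwards [hdet_ev, eventually_ge_atTop 1] with n hdet hn1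
    have hn0 : (n : ℝ) ≠ 0 := Nat.cast_ne_zero.mpr (by omega)
    have hnk : ((n : ℝ) ^ k) ≠ 0 := pow_ne_zero _ hn0
    have hu : IsUnit (Amat k ((n : ℝ)⁻¹)).det := isUnit_iff_ne_zero.mpr hdet
    haveI : Invertible ((n : ℝ) ^ k) := invertibleOfNonzero hnk
    rw [Gram_eq_smul k hn1, Matrix.inv_smul _ _ hu, Matrix.smul_mul, Matrix.trace_smul,
      smul_eq_mul, invOf_eq_inv, ← mul_assoc, mul_inv_cancel₀ hnk, one_mul]
  exact hmain.congr' hev.symm
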